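/- Let g : ℝⁿ → ℝ ∪ {+∞} be proper, lsc and convex, and γ > 0. Then for any x₁, x₂ ∈ ℝⁿ, (g(prox_{γg}(x₁)) - g(prox_{γg}(x₂)))/‖x₁ - x₂‖ ≤ (1/(2γ))‖x₁ - x₂‖ + (1/γ)‖x₁ - prox_{γg}(x₁)‖, provided x₁ ≠ x₂. In particular g ∘ prox_{γg} is locally Lipschitz (strictly continuous) on ℝⁿ. -/
import Mathlib

open scoped RealInnerProductSpace
open Filter

noncomputable section

abbrev E (n : ℕ) := EuclideanSpace ℝ (Fin n)

/-- `g` is proper, lower semicontinuous and convex (extended-real-valued). -/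
def ProperConvexLsc {n : ℕ} (g : E n → EReal) : Prop :=
  (∃ x, g x ≠ ⊤) ∧ (∀ x, g x ≠ ⊥) ∧ LowerSemicontinuous g ∧
    ∀ x y : E n, ∀ a b : ℝ, 0 ≤ a → 0 ≤ b → a + b = 1 →
      g (a • x + b • y) ≤ (a : ℝ) * g x + (b : ℝ) * g y

/-- `P` is the proximal operator of `g` with stepsize `γ`. -/
def IsProx {n : ℕ} (g : E n → EReal) (γ : ℝ) (P : E n → E n) : Prop :=
  ∀ z u, g (P z) + (((1 / (2 * γ)) * ‖P z - z‖ ^ 2 : ℝ) : EReal)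
        ≤ g u + (((1 / (2 * γ)) * ‖u - z‖ ^ 2 : ℝ) : EReal)

set_option maxHeartbeats 2000000 in
/-- Difference-quotient bound for `g ∘ prox_{γg}`, and local Lipschitz continuity. -/
theorem g_comp_prox_quotient_bound {n : ℕ} (g : E n → EReal) (γ : ℝ) (hγ : 0 < γ)
    (hg : ProperConvexLsc g) (P : E n → E n) (hP : IsProx g γ P) :
    (∀ x₁ x₂ : E n, x₁ ≠ x₂ →
      ((g (P x₁)).toReal - (g (P x₂)).toReal) / ‖x₁ - x₂‖ ≤
        (1 / (2 * γ)) * ‖x₁ - x₂‖ + (1 / γ) * ‖x₁ - P x₁‖) ∧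
      LocallyLipschitz (fun x => (g (P x)).toReal) := by
  obtain ⟨⟨x₀, hx₀⟩, hbot, _hlsc, hconv⟩ := hg
  have hγ' : γ ≠ 0 := hγ.ne'
  have hcpos : (0:ℝ) < 1 / (2 * γ) := by positivity
  -- g ∘ P is never ⊤
  have hfin : ∀ z, g (P z) ≠ ⊤ := by
    intro z htop
    have h := hP z x₀
    rw [htop, EReal.top_add_of_ne_bot (EReal.coe_ne_bot _)] at h
    exact absurd h (not_le.2 (EReal.add_lt_top hx₀ (EReal.coe_ne_top _)))
  -- real-valued prox inequality
  have hprox : ∀ z u, g u ≠ ⊤ →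
      (g (P z)).toReal + (1/(2*γ)) * ‖P z - z‖^2 ≤ (g u).toReal + (1/(2*γ)) * ‖u - z‖^2 := by
    intro z u hu
    have h := hP z u
    rw [← EReal.coe_toReal (hfin z) (hbot _), ← EReal.coe_toReal hu (hbot u),
      ← EReal.coe_add, ← EReal.coe_add] at h
    exact_mod_cast h
  -- real-valued convexity, plus finiteness at the combination
  have hGconv : ∀ x y : E n, ∀ a b : ℝ, 0 ≤ a → 0 ≤ b → a + b = 1 → g x ≠ ⊤ → g y ≠ ⊤ →
      g (a • x + b • y) ≠ ⊤ ∧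
      (g (a • x + b • y)).toReal ≤ a * (g x).toReal + b * (g y).toReal := by
    intro x y a b ha hb hab hx hy
    have h := hconv x y a b ha hb hab
    rw [← EReal.coe_toReal hx (hbot x), ← EReal.coe_toReal hy (hbot y)] at h
    have hcast : ((a:ℝ):EReal) * (((g x).toReal : ℝ) : EReal) + ((b:ℝ):EReal) * (((g y).toReal : ℝ) : EReal)
        = ((a * (g x).toReal + b * (g y).toReal : ℝ) : EReal) := by
      exact_mod_cast rfl
    rw [hcast] at h
    refine ⟨ne_top_of_le_ne_top (EReal.coe_ne_top _) h, ?_⟩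
    exact EReal.toReal_le_toReal h (hbot _) (EReal.coe_ne_top _)
  set f : E n → ℝ := fun z => (g (P z)).toReal with hf
  -- subgradient-type inequality
  have hB : ∀ x₁ x₂ : E n,
      f x₁ ≤ f x₂ + (1/γ) * ⟪P x₁ - x₁, P x₂ - P x₁⟫ := by
    intro x₁ x₂
    set v := P x₁ - x₁ with hv
    set w := P x₂ - P x₁ with hw
    refine le_of_forall_pos_le_add ?_
    intro ε hε
    set D : ℝ := (1/(2*γ)) * ‖w‖^2 with hD
    have hD0 : 0 ≤ D := by positivity
    set t : ℝ := min 1 (ε / (D + 1)) with ht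
    have ht0 : 0 < t := lt_min one_pos (by positivity)
    have ht1 : t ≤ 1 := min_le_left _ _
    have htε : t ≤ ε / (D + 1) := min_le_right _ _
    have hcomb := hGconv (P x₁) (P x₂) (1 - t) t (by linarith) ht0.le (by ring)
      (hfin x₁) (hfin x₂)
    have hpx := hprox x₁ ((1-t) • P x₁ + t • P x₂) hcomb.1
    have hcv := hcomb.2
    have huid : (1-t) • P x₁ + t • P x₂ - x₁ = v + t • w := by
      rw [hv, hw]; module
    have hexp : ‖(1-t) • P x₁ + t • P x₂ - x₁‖^2
        = ‖v‖^2 + 2 * t * ⟪v, w⟫ + t^2 * ‖w‖^2 := by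
      rw [huid, norm_add_sq_real, real_inner_smul_right, norm_smul, mul_pow]
      simp [abs_of_pos ht0]
      ring
    rw [hexp] at hpx
    -- t * f x₁ ≤ t * f x₂ + t * ((1/γ)⟪v,w⟫ + (1/(2γ)) t ‖w‖²)
    have key : f x₁ ≤ f x₂ + (1/γ) * ⟪v, w⟫ + D * t := by
      have h2 : t * f x₁ ≤ t * (f x₂ + (1/γ) * ⟪v, w⟫ + D * t) := by
        have h1γ : (1:ℝ)/γ = 2 * (1/(2*γ)) := by field_simp
        rw [h1γ]
        nlinarith [hpx, hcv]
      exact le_of_mul_le_mul_left (by linarith [h2]) ht0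
    have hDt : D * t ≤ ε := by
      have h1 : D * t ≤ D * (ε / (D+1)) := by
        exact mul_le_mul_of_nonneg_left htε hD0
      have h2 : D * (ε / (D+1)) ≤ ε := by
        rw [div_eq_mul_inv]
        have h3 : D * (ε * (D+1)⁻¹) = ε * (D * (D+1)⁻¹) := by ring
        rw [h3]
        have h4 : D * (D+1)⁻¹ ≤ 1 := by
          rw [mul_inv_le_iff₀ (by positivity)]
          linarith
        nlinarith
      linarith
    linarith
  -- nonexpansiveness
  have hC : ∀ x₁ x₂ : E n, ‖P x₁ - P x₂‖ ≤ ‖x₁ - x₂‖ := by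
    intro x₁ x₂
    have h1 := hB x₁ x₂
    have h2 := hB x₂ x₁
    have hkey : ⟪P x₁ - x₁, P x₂ - P x₁⟫ + ⟪P x₂ - x₂, P x₁ - P x₂⟫
        = ⟪x₁ - x₂, P x₁ - P x₂⟫ - ‖P x₁ - P x₂‖^2 := by
      simp only [inner_sub_left, inner_sub_right, real_inner_self_eq_norm_sq,
        norm_sub_sq_real]
      rw [real_inner_comm (P x₂) (P x₁)]
      ring
    have hsum : 0 ≤ (1/γ) * (⟪x₁ - x₂, P x₁ - P x₂⟫ - ‖P x₁ - P x₂‖^2) := by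
      rw [← hkey]; rw [mul_add]; linarith
    have hpos : 0 < (1:ℝ)/γ := by positivity
    have h3 : ‖P x₁ - P x₂‖^2 ≤ ⟪x₁ - x₂, P x₁ - P x₂⟫ := by nlinarith
    have h4 := real_inner_le_norm (x₁ - x₂) (P x₁ - P x₂)
    rcases eq_or_lt_of_le (norm_nonneg (P x₁ - P x₂)) with h | h
    · rw [← h]; exact norm_nonneg _
    · nlinarith
  -- main product-form bound
  have hbound : ∀ x₁ x₂ : E n, f x₁ - f x₂ ≤
      ((1/(2*γ)) * ‖x₁ - x₂‖ + (1/γ) * ‖x₁ - P x₁‖) * ‖x₁ - x₂‖ := by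
    intro x₁ x₂
    have h := hprox x₁ (P x₂) (hfin x₂)
    have htri : ‖P x₂ - x₁‖ ≤ ‖P x₂ - P x₁‖ + ‖P x₁ - x₁‖ :=
      norm_sub_le_norm_sub_add_norm_sub _ _ _
    have hne' : ‖P x₂ - P x₁‖ ≤ ‖x₁ - x₂‖ := by
      rw [norm_sub_rev]; exact hC x₁ x₂
    have hrev : ‖x₁ - P x₁‖ = ‖P x₁ - x₁‖ := norm_sub_rev _ _
    rw [hrev]
    set a := ‖P x₂ - x₁‖
    set b := ‖P x₁ - x₁‖
    set N := ‖x₁ - x₂‖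
    have ha0 : 0 ≤ a := norm_nonneg _
    have hb0 : 0 ≤ b := norm_nonneg _
    have hN0 : 0 ≤ N := norm_nonneg _
    have hab : a ≤ N + b := by linarith
    have hsq : a^2 ≤ (N+b)^2 := by
      have := pow_le_pow_left₀ ha0 hab 2
      simpa using this
    have h1γ : (1:ℝ)/γ = 2 * (1/(2*γ)) := by field_simp
    rw [h1γ]
    have hr : (1/(2*γ))*(a^2-b^2) = (1/(2*γ))*a^2 - (1/(2*γ))*b^2 := by ring
    have hd : f x₁ - f x₂ ≤ (1/(2*γ))*(a^2 - b^2) := by linarith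
    have hmono : (1/(2*γ))*(a^2-b^2) ≤ (1/(2*γ))*((N+b)^2 - b^2) :=
      mul_le_mul_of_nonneg_left (sub_le_sub_right hsq _) hcpos.le
    have hfin2 : (1/(2*γ))*((N+b)^2 - b^2) = ((1/(2*γ))*N + 2*(1/(2*γ))*b)*N := by ring
    linarith
  refine ⟨?_, ?_⟩
  · intro x₁ x₂ hne
    have hN : 0 < ‖x₁ - x₂‖ := by
      rw [norm_pos_iff]; exact sub_ne_zero.2 hne
    rw [div_le_iff₀ hN]
    exact hbound x₁ x₂
  · intro x
    set M := ‖x - P x‖ with hM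
    have hM0 : 0 ≤ M := norm_nonneg _
    refine ⟨Real.toNNReal ((1/γ) * (3 + M)), Metric.ball x 1, Metric.ball_mem_nhds x one_pos, ?_⟩
    rw [lipschitzOnWith_iff_dist_le_mul]
    intro y hy z hz
    rw [Metric.mem_ball] at hy hz
    have hK : (Real.toNNReal ((1/γ) * (3 + M)) : ℝ) = (1/γ) * (3 + M) :=
      Real.coe_toNNReal _ (by positivity)
    rw [hK, Real.dist_eq, dist_eq_norm]
    have hyz : ‖y - z‖ ≤ 2 := by
      have := norm_sub_le_norm_sub_add_norm_sub y x z
      rw [dist_eq_norm] at hy hz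
      rw [norm_sub_rev x z] at this
      linarith [hy.le, hz.le]
    have hyP : ∀ u : E n, dist u x < 1 → ‖u - P u‖ ≤ 2 + M := by
      intro u hu
      have t1 : ‖u - P u‖ ≤ ‖u - x‖ + ‖x - P x‖ + ‖P x - P u‖ := by
        have a1 := norm_sub_le_norm_sub_add_norm_sub u x (P u)
        have a2 := norm_sub_le_norm_sub_add_norm_sub x (P x) (P u)
        linarith
      have t2 : ‖P x - P u‖ ≤ ‖x - u‖ := hC x u
      rw [dist_eq_norm] at hu
      rw [norm_sub_rev x u] at t2
      linarith [hu.le]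
    have h1γ : (1:ℝ)/γ = 2 * (1/(2*γ)) := by field_simp
    have hb1 := hbound y z
    have hb2 := hbound z y
    rw [norm_sub_rev z y] at hb2
    have hyy := hyP y hy
    have hzz := hyP z hz
    have hNn : 0 ≤ ‖y - z‖ := norm_nonneg _
    rw [abs_le]
    constructor
    · have : f z - f y ≤ ((1/(2*γ)) * ‖y - z‖ + (1/γ) * ‖z - P z‖) * ‖y - z‖ := hb2
      have hcoef : (1/(2*γ)) * ‖y - z‖ + (1/γ) * ‖z - P z‖ ≤ (1/γ) * (3 + M) := by
        rw [h1γ]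
        have h5 : 0 ≤ ‖z - P z‖ := norm_nonneg _
        nlinarith
      nlinarith [mul_le_mul_of_nonneg_right hcoef hNn]
    · have : f y - f z ≤ ((1/(2*γ)) * ‖y - z‖ + (1/γ) * ‖y - P y‖) * ‖y - z‖ := hb1
      have hcoef : (1/(2*γ)) * ‖y - z‖ + (1/γ) * ‖y - P y‖ ≤ (1/γ) * (3 + M) := by
        rw [h1γ]
        have h5 : 0 ≤ ‖y - P y‖ := norm_nonneg _
        nlinarith
      nlinarith [mul_le_mul_of_nonneg_right hcoef hNn]
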